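/- Christoffel–Darboux determinant identity: for a weight ρ on ℝ with Hankel moment matrix (μ_{i+j})_{0≤i,j≤n} of nonzero determinant D_{n+1}, the sum Σ_{j=0}^{n} h_j^{-1} p_j(u) p_j(v) of products of the monic orthogonal polynomials p_j (with norms h_j = ∫ p_j^2 ρ) equals D_n((u-z)(v-z)ρ(z)) / D_{n+1}(ρ), where D_n((u-z)(v-z)ρ) is the determinant of the n×n matrix of moments of the weight (u-z)(v-z)ρ(z); equivalently it equals -(1/D_{n+1}) times the determinant of the bordered (n+2)×(n+2) matrix with top-left entry 0, first row (0, 1, v, ..., v^n), first column (0, 1, u, ..., u^n)^T, and remaining block (μ_{i+j})_{0≤i,j≤n}. -/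

import Mathlib

open Matrix Finset

namespace Stmt11

variable (μ : ℕ → ℝ)

noncomputable def cof (k : ℕ) (i : Fin (k+1)) : ℝ :=
  (-1 : ℝ) ^ ((i : ℕ) + k) *
    Matrix.det (Matrix.of fun i' j : Fin k => μ ((i.succAbove i' : ℕ) + j))

lemma q_expand (k : ℕ) (x : ℝ) :
    Matrix.det (Matrix.of fun i j : Fin (k + 1) =>
      if _h : (j : ℕ) < k then μ (i + j) else x ^ (i : ℕ)) =
    ∑ i : Fin (k+1), x ^ (i : ℕ) * cof μ k i := by
  rw [Matrix.det_succ_column _ (Fin.last k)]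
  refine Finset.sum_congr rfl fun i _ => ?_
  have h1 : ¬ ((Fin.last k : ℕ) < k) := by simp
  rw [cof]
  have h2 : ((Fin.last k).succAbove) = Fin.castSucc := Fin.succAbove_last
  simp only [Matrix.of_apply, h2]
  rw [dif_neg h1]
  have h3 : (Matrix.of fun i j : Fin (k + 1) =>
      if _h : (j : ℕ) < k then μ (i + j) else x ^ (i : ℕ)).submatrix i.succAbove Fin.castSucc
      = Matrix.of fun i' j : Fin k => μ ((i.succAbove i' : ℕ) + j) := by
    ext i' j
    simp [Fin.is_lt]
  rw [h3]
  simp [Fin.val_last]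
  ring

lemma orth (k m : ℕ) :
    ∑ i : Fin (k+1), cof μ k i * μ ((i:ℕ) + m) =
    Matrix.det (Matrix.of fun i j : Fin (k + 1) =>
      if (j : ℕ) < k then μ (i + j) else μ ((i:ℕ) + m)) := by
  rw [Matrix.det_succ_column _ (Fin.last k)]
  refine (Finset.sum_congr rfl fun i _ => ?_).symm
  have h1 : ¬ ((Fin.last k : ℕ) < k) := by simp
  rw [cof]
  have h2 : ((Fin.last k).succAbove) = Fin.castSucc := Fin.succAbove_last
  simp only [Matrix.of_apply, h2]
  rw [if_neg h1]
  have h3 : (Matrix.of fun i j : Fin (k + 1) =>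
      if (j : ℕ) < k then μ (i + j) else μ ((i:ℕ) + m)).submatrix i.succAbove Fin.castSucc
      = Matrix.of fun i' j : Fin k => μ ((i.succAbove i' : ℕ) + j) := by
    ext i' j
    simp [Fin.is_lt]
  rw [h3]
  simp [Fin.val_last]
  ring


lemma orth_lt (k m : ℕ) (hm : m < k) :
    ∑ i : Fin (k+1), cof μ k i * μ ((i:ℕ) + m) = 0 := by
  rw [orth]
  apply Matrix.det_zero_of_column_eq (i := (⟨m, by omega⟩ : Fin (k+1))) (j := Fin.last k)
  · intro h
    have := congrArg Fin.val h
    simp at this; omega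
  · intro r
    simp [hm]

lemma orth_eq (k : ℕ) :
    ∑ i : Fin (k+1), cof μ k i * μ ((i:ℕ) + k) =
    Matrix.det (Matrix.of fun i j : Fin (k + 1) => μ (i + j)) := by
  rw [orth]
  congr 1
  ext i j
  by_cases h : (j:ℕ) < k
  · simp [h]
  · have : (j:ℕ) = k := by omega
    simp [h, this]


lemma cof_last (k : ℕ) :
    cof μ k (Fin.last k) = Matrix.det (Matrix.of fun i j : Fin k => μ (i + j)) := by
  rw [cof]
  have h1 : (-1:ℝ)^((Fin.last k : ℕ) + k) = 1 := by
    rw [Fin.val_last]; exact Even.neg_one_pow ⟨k, rfl⟩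
  rw [h1, one_mul]
  congr 1
  ext i' j
  simp [Fin.succAbove_last]

noncomputable def cofn (k i : ℕ) : ℝ :=
  if h : i < k + 1 then cof μ k ⟨i, h⟩ else 0

lemma cofn_val (k : ℕ) (i : Fin (k+1)) : cofn μ k (i:ℕ) = cof μ k i := by
  rw [cofn, dif_pos i.isLt]

lemma cofn_diag (k : ℕ) :
    cofn μ k k = Matrix.det (Matrix.of fun i j : Fin k => μ (i + j)) := by
  rw [cofn, dif_pos (by omega : k < k + 1)]
  exact cof_last μ k

lemma q_expandn (k : ℕ) (x : ℝ) :
    Matrix.det (Matrix.of fun i j : Fin (k + 1) =>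
      if _h : (j : ℕ) < k then μ (i + j) else x ^ (i : ℕ)) =
    ∑ i ∈ Finset.range (k+1), x ^ i * cofn μ k i := by
  rw [q_expand, ← Fin.sum_univ_eq_sum_range (fun c => x ^ c * cofn μ k c) (k+1)]
  exact Finset.sum_congr rfl fun i _ => by rw [cofn_val]

lemma orthn_lt (k m : ℕ) (hm : m < k) :
    ∑ i ∈ Finset.range (k+1), cofn μ k i * μ (i + m) = 0 := by
  rw [← Fin.sum_univ_eq_sum_range (fun c => cofn μ k c * μ (c + m)) (k+1), ← orth_lt μ k m hm]
  exact Finset.sum_congr rfl fun i _ => by rw [cofn_val]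

lemma orthn_eq (k : ℕ) :
    ∑ i ∈ Finset.range (k+1), cofn μ k i * μ (i + k) =
    Matrix.det (Matrix.of fun i j : Fin (k + 1) => μ (i + j)) := by
  rw [← Fin.sum_univ_eq_sum_range (fun c => cofn μ k c * μ (c + k)) (k+1), ← orth_eq μ k]
  exact Finset.sum_congr rfl fun i _ => by rw [cofn_val]


lemma mulLo (n : ℕ) (w : ℝ)
    (X : Matrix (Fin (n+2)) (Fin (n+2)) ℝ) (i b : Fin (n+2)) :
    ((Matrix.of fun i a : Fin (n+2) =>
        if (a:ℕ)+1 = (i:ℕ) ∧ 2 ≤ (i:ℕ) then -w else 0) * X) i b =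
      if 2 ≤ (i:ℕ) then -w * X ⟨(i:ℕ)-1, by omega⟩ b else 0 := by
  rw [Matrix.mul_apply]
  by_cases h : 2 ≤ (i:ℕ)
  · rw [if_pos h, Finset.sum_eq_single (⟨(i:ℕ)-1, by omega⟩ : Fin (n+2))]
    · simp only [Matrix.of_apply]
      rw [if_pos ⟨show (i:ℕ) - 1 + 1 = (i:ℕ) by omega, h⟩]
    · intro a _ ha
      simp only [Matrix.of_apply]
      rw [if_neg, zero_mul]
      rintro ⟨h1, -⟩
      exact ha (Fin.ext (show (a:ℕ) = (i:ℕ) - 1 by omega))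
    · intro h'; exact absurd (Finset.mem_univ _) h'
  · rw [if_neg h]
    apply Finset.sum_eq_zero
    intro a _
    simp only [Matrix.of_apply]
    rw [if_neg, zero_mul]
    rintro ⟨-, h2⟩; exact h h2


lemma mulRo (n : ℕ) (w : ℝ)
    (X : Matrix (Fin (n+2)) (Fin (n+2)) ℝ) (i j : Fin (n+2)) :
    (X * (Matrix.of fun b j : Fin (n+2) =>
        if (b:ℕ)+1 = (j:ℕ) ∧ 2 ≤ (j:ℕ) then -w else 0)) i j =
      if 2 ≤ (j:ℕ) then -w * X i ⟨(j:ℕ)-1, by omega⟩ else 0 := by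
  rw [Matrix.mul_apply]
  by_cases h : 2 ≤ (j:ℕ)
  · rw [if_pos h, Finset.sum_eq_single (⟨(j:ℕ)-1, by omega⟩ : Fin (n+2))]
    · simp only [Matrix.of_apply]
      rw [if_pos ⟨show (j:ℕ) - 1 + 1 = (j:ℕ) by omega, h⟩]
      ring
    · intro a _ ha
      simp only [Matrix.of_apply]
      rw [if_neg, mul_zero]
      rintro ⟨h1, -⟩
      exact ha (Fin.ext (show (a:ℕ) = (j:ℕ) - 1 by omega))
    · intro h'; exact absurd (Finset.mem_univ _) h'
  · rw [if_neg h]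
    apply Finset.sum_eq_zero
    intro a _
    simp only [Matrix.of_apply]
    rw [if_neg, mul_zero]
    rintro ⟨-, h2⟩; exact h h2


noncomputable def Gm (μ : ℕ → ℝ) (n : ℕ) (u v : ℝ) : Matrix (Fin (n+2)) (Fin (n+2)) ℝ :=
  Matrix.of fun i j =>
  if (i:ℕ) = 0 then (if (j:ℕ) = 1 then (1:ℝ) else 0)
  else if (i:ℕ) = 1 then (if (j:ℕ) = 0 then 1 else if (j:ℕ) = 1 then μ 0
       else μ ((j:ℕ)-1) - v * μ ((j:ℕ)-2))
  else if (j:ℕ) = 0 then 0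
  else if (j:ℕ) = 1 then μ ((i:ℕ)-1) - u * μ ((i:ℕ)-2)
  else u * v * μ ((i:ℕ) + (j:ℕ) - 4) - (u + v) * μ ((i:ℕ) + (j:ℕ) - 3) + μ ((i:ℕ) + (j:ℕ) - 2)

lemma det_G (μ : ℕ → ℝ) (n : ℕ) (u v : ℝ) : (Gm μ n u v).det =
    - Matrix.det (Matrix.of fun i j : Fin n =>
        u * v * μ (i + j) - (u + v) * μ (i + j + 1) + μ (i + j + 2)) := by
  rw [Matrix.det_succ_row_zero]
  rw [Finset.sum_eq_single (1 : Fin (n+2))]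
  · have h01 : ((1 : Fin (n+2)) : ℕ) = 1 := rfl
    have hG01 : Gm μ n u v 0 1 = 1 := by simp [Gm]
    rw [hG01, h01]
    have hmin : ((Gm μ n u v).submatrix Fin.succ (1 : Fin (n+2)).succAbove).det =
        Matrix.det (Matrix.of fun i j : Fin n =>
          u * v * μ (i + j) - (u + v) * μ (i + j + 1) + μ (i + j + 2)) := by
      rw [Matrix.det_succ_column_zero]
      rw [Finset.sum_eq_single (0 : Fin (n+1))]
      · have e0 : (1 : Fin (n+2)).succAbove (0 : Fin (n+1)) = 0 := by
          rw [Fin.succAbove_of_castSucc_lt] <;> simp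
        have hent : ((Gm μ n u v).submatrix Fin.succ (1 : Fin (n+2)).succAbove) 0 0 = 1 := by
          simp [Matrix.submatrix_apply, e0, Gm]
        rw [hent]
        have hcomp : (((Gm μ n u v).submatrix Fin.succ (1 : Fin (n+2)).succAbove).submatrix
            (0 : Fin (n+1)).succAbove Fin.succ) =
            Matrix.of fun i j : Fin n =>
              u * v * μ (i + j) - (u + v) * μ (i + j + 1) + μ (i + j + 2) := by
          ext i j
          have e1 : (1 : Fin (n+2)).succAbove (Fin.succ j) = Fin.succ (Fin.succ j) := by
            rw [Fin.succAbove_of_le_castSucc]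
            simp [Fin.le_iff_val_le_val]
          have e2 : (0 : Fin (n+1)).succAbove i = Fin.succ i := by
            rw [Fin.succAbove_of_le_castSucc]; simp
          simp only [Matrix.submatrix_apply, e2, e1, Gm, Matrix.of_apply]
          have hi : ((Fin.succ (Fin.succ i) : Fin (n+2)) : ℕ) = (i:ℕ) + 2 := by simp
          have hj : ((Fin.succ (Fin.succ j) : Fin (n+2)) : ℕ) = (j:ℕ) + 2 := by simp
          rw [hi, hj]
          have c1 : ¬((i:ℕ) + 2 = 0) := by omega
          have c2 : ¬((i:ℕ) + 2 = 1) := by omega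
          have c3 : ¬((j:ℕ) + 2 = 0) := by omega
          have c4 : ¬((j:ℕ) + 2 = 1) := by omega
          rw [if_neg c1, if_neg c2, if_neg c3, if_neg c4]
          have : (i:ℕ) + 2 + ((j:ℕ) + 2) - 4 = (i:ℕ) + (j:ℕ) := by omega
          rw [this]
          have : (i:ℕ) + 2 + ((j:ℕ) + 2) - 3 = (i:ℕ) + (j:ℕ) + 1 := by omega
          rw [this]
          have : (i:ℕ) + 2 + ((j:ℕ) + 2) - 2 = (i:ℕ) + (j:ℕ) + 2 := by omega
          rw [this]
        rw [hcomp]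
        simp
      · intro b _ hb
        have : ((Gm μ n u v).submatrix Fin.succ (1 : Fin (n+2)).succAbove) b 0 = 0 := by
          have e0 : (1 : Fin (n+2)).succAbove (0 : Fin (n+1)) = 0 := by
            rw [Fin.succAbove_of_castSucc_lt] <;> simp
          have hb' : (b:ℕ) ≠ 0 := by
            intro h; exact hb (Fin.ext h)
          simp only [Matrix.submatrix_apply, e0, Gm, Matrix.of_apply]
          have h1 : ((Fin.succ b : Fin (n+2)) : ℕ) = (b:ℕ) + 1 := by simp
          rw [h1]
          have c1 : ¬((b:ℕ) + 1 = 0) := by omega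
          have c2 : ¬((b:ℕ) + 1 = 1) := by omega
          simp [c1, c2, hb]
        rw [this]; ring
      · intro h; exact absurd (Finset.mem_univ _) h
    rw [hmin]
    ring
  · intro b _ hb
    have : Gm μ n u v 0 b = 0 := by
      have hb' : (b:ℕ) ≠ 1 := by
        intro h; exact hb (Fin.ext h)
      simp [Gm, hb']
    rw [this]; ring
  · intro h; exact absurd (Finset.mem_univ _) h


lemma LBR_eq (μ : ℕ → ℝ) (n : ℕ) (u v : ℝ) :
    ((1 + (Matrix.of fun i a : Fin (n+2) =>
        if (a:ℕ)+1 = (i:ℕ) ∧ 2 ≤ (i:ℕ) then -u else 0)) *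
     (Matrix.of fun i j : Fin (n+2) =>
          if (i : ℕ) = 0 then
            (if (j : ℕ) = 0 then 0 else v ^ ((j : ℕ) - 1))
          else if (j : ℕ) = 0 then u ^ ((i : ℕ) - 1)
          else μ (((i : ℕ) - 1) + ((j : ℕ) - 1))) *
     (1 + (Matrix.of fun b j : Fin (n+2) =>
        if (b:ℕ)+1 = (j:ℕ) ∧ 2 ≤ (j:ℕ) then -v else 0)))
    = Gm μ n u v := by
  set B' : Matrix (Fin (n+2)) (Fin (n+2)) ℝ := Matrix.of fun i j =>
          if (i : ℕ) = 0 then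
            (if (j : ℕ) = 0 then 0 else v ^ ((j : ℕ) - 1))
          else if (j : ℕ) = 0 then u ^ ((i : ℕ) - 1)
          else μ (((i : ℕ) - 1) + ((j : ℕ) - 1)) with hB'
  set Lo : Matrix (Fin (n+2)) (Fin (n+2)) ℝ :=
    Matrix.of fun i a => if (a:ℕ)+1 = (i:ℕ) ∧ 2 ≤ (i:ℕ) then -u else 0 with hLo
  set Ro : Matrix (Fin (n+2)) (Fin (n+2)) ℝ :=
    Matrix.of fun b j => if (b:ℕ)+1 = (j:ℕ) ∧ 2 ≤ (j:ℕ) then -v else 0 with hRo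
  have hW : ∀ i b : Fin (n+2), ((1 + Lo) * B') i b =
      B' i b + (if 2 ≤ (i:ℕ) then -u * B' ⟨(i:ℕ)-1, by omega⟩ b else 0) := by
    intro i b
    rw [add_mul, one_mul, Matrix.add_apply, hLo, mulLo]
  ext i j
  have hstep : ((1 + Lo) * B' * (1 + Ro)) i j = ((1 + Lo) * B') i j +
      (if 2 ≤ (j:ℕ) then -v * ((1 + Lo) * B') i ⟨(j:ℕ)-1, by omega⟩ else 0) := by
    rw [mul_add, mul_one, Matrix.add_apply, hRo, mulRo]
  rw [hstep, hW, hW]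
  have hBval : ∀ a b : Fin (n+2), B' a b =
      if (a : ℕ) = 0 then
        (if (b : ℕ) = 0 then 0 else v ^ ((b : ℕ) - 1))
      else if (b : ℕ) = 0 then u ^ ((a : ℕ) - 1)
      else μ (((a : ℕ) - 1) + ((b : ℕ) - 1)) := fun a b => rfl
  simp only [hBval, Fin.val_mk, Gm, Matrix.of_apply]
  by_cases hi2 : 2 ≤ (i:ℕ)
  · have l1 : ¬((i:ℕ) = 0) := by omega
    have l2 : ¬((i:ℕ) = 1) := by omega
    have l3 : ¬((i:ℕ) - 1 = 0) := by omega
    by_cases hj2 : 2 ≤ (j:ℕ)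
    · have m1 : ¬((j:ℕ) = 0) := by omega
      have m2 : ¬((j:ℕ) = 1) := by omega
      have m3 : ¬((j:ℕ) - 1 = 0) := by omega
      simp only [hi2, hj2, l1, l2, l3, m1, m2, m3, if_true, if_false, ite_true, ite_false]
      norm_num
      have e1 : (i:ℕ) - 1 + ((j:ℕ) - 1) = (i:ℕ) + (j:ℕ) - 2 := by omega
      have e2 : (i:ℕ) - 1 - 1 + ((j:ℕ) - 1) = (i:ℕ) + (j:ℕ) - 3 := by omega
      have e3 : (i:ℕ) - 1 + ((j:ℕ) - 1 - 1) = (i:ℕ) + (j:ℕ) - 3 := by omega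
      have e4 : (i:ℕ) - 1 - 1 + ((j:ℕ) - 1 - 1) = (i:ℕ) + (j:ℕ) - 4 := by omega
      rw [e1, e2, e3, e4]
      ring
    · by_cases hj0 : (j:ℕ) = 0
      · simp only [hi2, hj2, l1, l2, l3, hj0, if_true, if_false, ite_true, ite_false]
        norm_num
        have hp : u ^ ((i:ℕ)-1) = u * u ^ ((i:ℕ)-2) := by
          rw [show (i:ℕ)-1 = ((i:ℕ)-2)+1 from by omega]; ring
        rw [show (i:ℕ)-1-1 = (i:ℕ)-2 from by omega, hp]; ring
      · have hj1 : (j:ℕ) = 1 := by omega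
        simp only [hi2, hj2, l1, l2, l3, hj0, hj1, if_true, if_false, ite_true, ite_false]
        norm_num
        rw [show (i:ℕ)-1-1 = (i:ℕ)-2 from by omega]
        ring
  · by_cases hi0 : (i:ℕ) = 0
    · by_cases hj2 : 2 ≤ (j:ℕ)
      · have m1 : ¬((j:ℕ) = 0) := by omega
        have m2 : ¬((j:ℕ) = 1) := by omega
        have m3 : ¬((j:ℕ) - 1 = 0) := by omega
        simp only [hi2, hi0, hj2, m1, m2, m3, if_true, if_false, ite_true, ite_false]
        norm_num
        have hp : v ^ ((j:ℕ)-1) = v * v ^ ((j:ℕ)-2) := by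
          rw [show (j:ℕ)-1 = ((j:ℕ)-2)+1 from by omega]; ring
        rw [show (j:ℕ)-1-1 = (j:ℕ)-2 from by omega, hp]; ring
      · by_cases hj0 : (j:ℕ) = 0
        · simp only [hi2, hi0, hj2, hj0, if_true, if_false, ite_true, ite_false]
          norm_num
        · have hj1 : (j:ℕ) = 1 := by omega
          simp only [hi2, hi0, hj2, hj0, hj1, if_true, if_false, ite_true, ite_false]
          norm_num
    · have hi1 : (i:ℕ) = 1 := by omega
      by_cases hj2 : 2 ≤ (j:ℕ)
      · have m1 : ¬((j:ℕ) = 0) := by omega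
        have m2 : ¬((j:ℕ) = 1) := by omega
        have m3 : ¬((j:ℕ) - 1 = 0) := by omega
        simp only [hi2, hi0, hi1, hj2, m1, m2, m3, if_true, if_false, ite_true, ite_false]
        norm_num
        rw [show (j:ℕ)-1-1 = (j:ℕ)-2 from by omega]
        ring
      · by_cases hj0 : (j:ℕ) = 0
        · simp only [hi2, hi0, hi1, hj2, hj0, if_true, if_false, ite_true, ite_false]
          norm_num
        · have hj1 : (j:ℕ) = 1 := by omega
          simp only [hi2, hi0, hi1, hj2, hj0, hj1, if_true, if_false, ite_true, ite_false]
          norm_num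



lemma det_bordered_neg (μ : ℕ → ℝ) (n : ℕ) (u v : ℝ) :
    Matrix.det (Matrix.of fun i j : Fin (n + 2) =>
          if (i : ℕ) = 0 then
            (if (j : ℕ) = 0 then 0 else v ^ ((j : ℕ) - 1))
          else if (j : ℕ) = 0 then u ^ ((i : ℕ) - 1)
          else μ (((i : ℕ) - 1) + ((j : ℕ) - 1))) =
    - Matrix.det (Matrix.of fun i j : Fin n =>
        u * v * μ (i + j) - (u + v) * μ (i + j + 1) + μ (i + j + 2)) := by
  set L : Matrix (Fin (n+2)) (Fin (n+2)) ℝ :=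
    1 + (Matrix.of fun i a : Fin (n+2) => if (a:ℕ)+1 = (i:ℕ) ∧ 2 ≤ (i:ℕ) then -u else 0) with hL
  set R : Matrix (Fin (n+2)) (Fin (n+2)) ℝ :=
    1 + (Matrix.of fun b j : Fin (n+2) => if (b:ℕ)+1 = (j:ℕ) ∧ 2 ≤ (j:ℕ) then -v else 0) with hR
  have hdetL : L.det = 1 := by
    rw [Matrix.det_of_lowerTriangular L (by
      intro i j hij
      have hij' : i < j := hij
      simp only [hL, Matrix.add_apply, Matrix.of_apply, Matrix.one_apply]
      rw [if_neg (Fin.ne_of_lt hij'), if_neg (by rintro ⟨h1, -⟩; omega)]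
      norm_num)]
    apply Finset.prod_eq_one
    intro i _
    simp only [hL, Matrix.add_apply, Matrix.of_apply, Matrix.one_apply_eq]
    rw [if_neg (by rintro ⟨h1, -⟩; omega)]
    norm_num
  have hdetR : R.det = 1 := by
    rw [Matrix.det_of_upperTriangular (by
      intro i j hij
      have hij' : j < i := hij
      simp only [hR, Matrix.add_apply, Matrix.of_apply, Matrix.one_apply]
      rw [if_neg (Fin.ne_of_gt hij'), if_neg (by rintro ⟨h1, -⟩; omega)]
      norm_num)]
    apply Finset.prod_eq_one
    intro i _
    simp only [hR, Matrix.add_apply, Matrix.of_apply, Matrix.one_apply_eq]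
    rw [if_neg (by rintro ⟨h1, -⟩; omega)]
    norm_num
  have key : (L * (Matrix.of fun i j : Fin (n + 2) =>
          if (i : ℕ) = 0 then
            (if (j : ℕ) = 0 then 0 else v ^ ((j : ℕ) - 1))
          else if (j : ℕ) = 0 then u ^ ((i : ℕ) - 1)
          else μ (((i : ℕ) - 1) + ((j : ℕ) - 1))) * R).det = Matrix.det (Gm μ n u v) := by
    rw [hL, hR, LBR_eq]
  rw [Matrix.det_mul, Matrix.det_mul, hdetL, hdetR, one_mul, mul_one] at key
  rw [key, det_G]

lemma det_bordered (μ : ℕ → ℝ) (n : ℕ) (u v : ℝ)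
    (hd : IsUnit (Matrix.det (Matrix.of fun i j : Fin (n+1) => μ (i + j)))) :
    Matrix.det (Matrix.of fun i j : Fin (n + 2) =>
          if (i : ℕ) = 0 then
            (if (j : ℕ) = 0 then 0 else v ^ ((j : ℕ) - 1))
          else if (j : ℕ) = 0 then u ^ ((i : ℕ) - 1)
          else μ (((i : ℕ) - 1) + ((j : ℕ) - 1))) =
    Matrix.det (Matrix.of fun i j : Fin (n+1) => μ (i + j)) *
      -(((Matrix.of fun (_ : Fin 1) (j : Fin (n+1)) => v ^ (j:ℕ)) *
          (Matrix.of fun i j : Fin (n+1) => μ (i + j))⁻¹ *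
          (Matrix.of fun (i : Fin (n+1)) (_ : Fin 1) => u ^ (i:ℕ))) 0 0) := by
  set H : Matrix (Fin (n+1)) (Fin (n+1)) ℝ := Matrix.of fun i j => μ (i + j) with hH
  set Br : Matrix (Fin 1) (Fin (n+1)) ℝ := Matrix.of fun _ j => v ^ (j:ℕ) with hBr
  set Bc : Matrix (Fin (n+1)) (Fin 1) ℝ := Matrix.of fun i _ => u ^ (i:ℕ) with hBc
  set B' : Matrix (Fin (n+2)) (Fin (n+2)) ℝ := Matrix.of fun i j =>
          if (i : ℕ) = 0 then
            (if (j : ℕ) = 0 then 0 else v ^ ((j : ℕ) - 1))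
          else if (j : ℕ) = 0 then u ^ ((i : ℕ) - 1)
          else μ (((i : ℕ) - 1) + ((j : ℕ) - 1)) with hB'
  haveI : Invertible H := H.invertibleOfIsUnitDet hd
  let e : Fin 1 ⊕ Fin (n+1) ≃ Fin (n+2) :=
    finSumFinEquiv.trans (finCongr (by omega))
  have he1 : ∀ i : Fin 1, ((e (Sum.inl i) : Fin (n+2)) : ℕ) = 0 := by
    intro i; simp [e, finSumFinEquiv, Fin.ext_iff]
  have he2 : ∀ j : Fin (n+1), ((e (Sum.inr j) : Fin (n+2)) : ℕ) = 1 + (j:ℕ) := by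
    intro j; simp [e, finSumFinEquiv, Fin.ext_iff]; omega
  have hsub : B'.submatrix e e = Matrix.fromBlocks 0 Br Bc H := by
    ext i j
    cases i with
    | inl i => cases j with
      | inl j => simp [B', he1, (show e (Sum.inl i) = 0 from Fin.ext (he1 i)), (show e (Sum.inl j) = 0 from Fin.ext (he1 j))]
      | inr j => simp [B', hBr, he1, he2, Nat.add_sub_cancel_left, (show e (Sum.inl i) = 0 from Fin.ext (he1 i)), (show e (Sum.inr j) ≠ 0 from fun h => by simpa [he2] using congrArg Fin.val h)]
    | inr i => cases j with
      | inl j => simp [B', hBc, he1, he2, Nat.add_sub_cancel_left, (show e (Sum.inr i) ≠ 0 from fun h => by simpa [he2] using congrArg Fin.val h), (show e (Sum.inl j) = 0 from Fin.ext (he1 j))]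
      | inr j => simp [B', hH, he1, he2, Nat.add_sub_cancel_left, (show e (Sum.inr i) ≠ 0 from fun h => by simpa [he2] using congrArg Fin.val h), (show e (Sum.inr j) ≠ 0 from fun h => by simpa [he2] using congrArg Fin.val h)]
  have hdet : B'.det = (Matrix.fromBlocks 0 Br Bc H).det := by
    rw [← hsub, Matrix.det_submatrix_equiv_self]
  rw [hdet, Matrix.det_fromBlocks₂₂]
  congr 1
  rw [Matrix.det_fin_one, Matrix.invOf_eq_nonsing_inv]
  simp


end Stmt11

/-- Christoffel–Darboux determinant identity: for Hankel moments μ with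
all leading minors `D_k = det(μ_{i+j})_{k×k}` nonzero, monic orthogonal polynomials
`p_j(x) = D_j⁻¹ det[(μ_{i+j'}) | (x^i)]` and norms `h_j = D_{j+1}/D_j`,
`Σ_{j=0}^n h_j⁻¹ p_j(u) p_j(v) = det(uv μ_{i+j} - (u+v) μ_{i+j+1} + μ_{i+j+2})_{n×n} / D_{n+1}`,
which also equals `-(1/D_{n+1})` times the bordered (n+2)×(n+2) determinant with corner 0,
first row `(0,1,v,…,v^n)`, first column `(0,1,u,…,u^n)ᵀ` and block `(μ_{i+j})_{0≤i,j≤n}`. -/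
theorem stmt11 (μ : ℕ → ℝ) (n : ℕ)
    (hD : ∀ k : ℕ, Matrix.det (Matrix.of fun i j : Fin k => μ (i + j)) ≠ 0)
    (u v : ℝ)
    (D : ℕ → ℝ) (hDdef : ∀ k, D k = Matrix.det (Matrix.of fun i j : Fin k => μ (i + j)))
    (p : ℕ → ℝ → ℝ)
    (hpdef : ∀ (k : ℕ) (x : ℝ), p k x = (D k)⁻¹ *
      Matrix.det (Matrix.of fun i j : Fin (k + 1) =>
        if h : (j : ℕ) < k then μ (i + j) else x ^ (i : ℕ))) :
    (∑ j ∈ Finset.range (n + 1), (D j / D (j + 1)) * p j u * p j v) =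
      Matrix.det (Matrix.of fun i j : Fin n =>
        u * v * μ (i + j) - (u + v) * μ (i + j + 1) + μ (i + j + 2)) / D (n + 1) ∧
    (∑ j ∈ Finset.range (n + 1), (D j / D (j + 1)) * p j u * p j v) =
      -(D (n + 1))⁻¹ *
        Matrix.det (Matrix.of fun i j : Fin (n + 2) =>
          if (i : ℕ) = 0 then
            (if (j : ℕ) = 0 then 0 else v ^ ((j : ℕ) - 1))
          else if (j : ℕ) = 0 then u ^ ((i : ℕ) - 1)
          else μ (((i : ℕ) - 1) + ((j : ℕ) - 1))) := by
  classical
  have hD1 : ∀ k, D k ≠ 0 := fun k => by rw [hDdef]; exact hD k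
  set q : ℕ → ℝ → ℝ :=
    fun k x => ∑ i ∈ Finset.range (k+1), x ^ i * Stmt11.cofn μ k i with hq
  have hpq : ∀ (k : ℕ) (x : ℝ), p k x = (D k)⁻¹ * q k x := by
    intro k x
    rw [hpdef, Stmt11.q_expandn]
  have hqalt : ∀ (k : ℕ) (x : ℝ),
      q k x = ∑ c ∈ Finset.range (k+1), Stmt11.cofn μ k c * x ^ c := by
    intro k x
    simp only [hq]
    exact Finset.sum_congr rfl fun c _ => mul_comm _ _
  set H : Matrix (Fin (n+1)) (Fin (n+1)) ℝ := Matrix.of fun i j => μ (i + j) with hH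
  set P : Matrix (Fin (n+1)) (Fin (n+1)) ℝ :=
    Matrix.of fun j i => if (i:ℕ) ≤ (j:ℕ) then Stmt11.cofn μ j i else 0 with hP
  have hHdet : H.det = D (n+1) := (hDdef (n+1)).symm
  have hHunit : IsUnit H.det := by
    rw [hHdet]; exact isUnit_iff_ne_zero.mpr (hD1 (n+1))
  have hHsymm : Hᵀ = H := by
    ext i j
    simp only [Matrix.transpose_apply, hH, Matrix.of_apply, Nat.add_comm]
  have hPjj : ∀ j : Fin (n+1), P j j = D (j:ℕ) := by
    intro j
    simp only [hP, Matrix.of_apply, le_refl, if_pos]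
    rw [Stmt11.cofn_diag, hDdef]
  have hPzero : ∀ j i : Fin (n+1), (j:ℕ) < (i:ℕ) → P j i = 0 := by
    intro j i h
    simp only [hP, Matrix.of_apply]
    rw [if_neg (by omega)]
  have hsumred : ∀ (j : Fin (n+1)) (g : ℕ → ℝ),
      ∑ c ∈ Finset.range (n+1),
          (if c ≤ (j:ℕ) then Stmt11.cofn μ (j:ℕ) c else 0) * g c
        = ∑ c ∈ Finset.range ((j:ℕ)+1), Stmt11.cofn μ (j:ℕ) c * g c := by
    intro j g
    calc ∑ c ∈ Finset.range (n+1),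
        (if c ≤ (j:ℕ) then Stmt11.cofn μ (j:ℕ) c else 0) * g c
        = ∑ c ∈ Finset.range ((j:ℕ)+1),
            (if c ≤ (j:ℕ) then Stmt11.cofn μ (j:ℕ) c else 0) * g c := by
          refine (Finset.sum_subset (Finset.range_subset_range.2 (by omega)) ?_).symm
          intro c _ hc
          simp only [Finset.mem_range] at hc
          rw [if_neg (by omega), zero_mul]
      _ = ∑ c ∈ Finset.range ((j:ℕ)+1), Stmt11.cofn μ (j:ℕ) c * g c := by
          refine Finset.sum_congr rfl fun c hc => ?_
          simp only [Finset.mem_range] at hc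
          rw [if_pos (by omega)]
  have hPH : ∀ (j m : Fin (n+1)), (P * H) j m =
      ∑ c ∈ Finset.range ((j:ℕ)+1), Stmt11.cofn μ (j:ℕ) c * μ (c + (m:ℕ)) := by
    intro j m
    rw [Matrix.mul_apply, ← hsumred j (fun c => μ (c + (m:ℕ))),
      ← Fin.sum_univ_eq_sum_range
        (fun c => (if c ≤ (j:ℕ) then Stmt11.cofn μ (j:ℕ) c else 0) * μ (c + (m:ℕ))) (n+1)]
    exact Finset.sum_congr rfl fun i _ => by simp only [hP, hH, Matrix.of_apply]
  have hPH_lt : ∀ j m : Fin (n+1), (m:ℕ) < (j:ℕ) → (P * H) j m = 0 := by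
    intro j m h
    rw [hPH]
    exact Stmt11.orthn_lt μ (j:ℕ) (m:ℕ) h
  have hPH_diag : ∀ j : Fin (n+1), (P * H) j j = D ((j:ℕ)+1) := by
    intro j
    rw [hPH, Stmt11.orthn_eq μ (j:ℕ)]
    exact (hDdef _).symm
  set dvec : Fin (n+1) → ℝ := fun j => D (j:ℕ) * D ((j:ℕ)+1) with hdvec
  set dinv : Fin (n+1) → ℝ := fun j => (D (j:ℕ) * D ((j:ℕ)+1))⁻¹ with hdinv
  have hS : P * H * Pᵀ = Matrix.diagonal dvec := by
    have hoffd : ∀ j j' : Fin (n+1), j' < j → (P * H * Pᵀ) j j' = 0 := by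
      intro j j' h
      rw [Matrix.mul_apply]
      apply Finset.sum_eq_zero
      intro m _
      rcases lt_or_ge (m:ℕ) (j:ℕ) with hm | hm
      · rw [hPH_lt j m hm, zero_mul]
      · have hj' : (j':ℕ) < (m:ℕ) := by
          have : (j':ℕ) < (j:ℕ) := h
          omega
        rw [Matrix.transpose_apply, hPzero j' m hj', mul_zero]
    have hsymmS : (P * H * Pᵀ)ᵀ = P * H * Pᵀ := by
      rw [Matrix.transpose_mul, Matrix.transpose_mul, Matrix.transpose_transpose,
        hHsymm, ← Matrix.mul_assoc]
    ext j j'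
    rcases lt_trichotomy j j' with h | h | h
    · rw [Matrix.diagonal_apply_ne _ (ne_of_lt h)]
      calc (P * H * Pᵀ) j j' = (P * H * Pᵀ)ᵀ j' j := rfl
        _ = (P * H * Pᵀ) j' j := by rw [hsymmS]
        _ = 0 := hoffd j' j h
    · subst h
      rw [Matrix.diagonal_apply_eq, Matrix.mul_apply, Finset.sum_eq_single j]
      · rw [Matrix.transpose_apply, hPH_diag j, hPjj j, hdvec]
        ring
      · intro m _ hm
        rcases lt_or_ge (m:ℕ) (j:ℕ) with h2 | h2
        · rw [hPH_lt j m h2, zero_mul]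
        · have hne : (m:ℕ) ≠ (j:ℕ) := fun hh => hm (Fin.ext hh)
          rw [Matrix.transpose_apply, hPzero j m (by omega), mul_zero]
      · intro hj; exact absurd (Finset.mem_univ _) hj
    · rw [Matrix.diagonal_apply_ne _ (ne_of_gt h)]
      exact hoffd j j' h
  have hPdet : IsUnit P.det := by
    have htri : P.BlockTriangular OrderDual.toDual := by
      intro i j hij
      exact hPzero i j (show (i:ℕ) < (j:ℕ) from hij)
    rw [Matrix.det_of_lowerTriangular P htri]
    refine isUnit_iff_ne_zero.mpr (Finset.prod_ne_zero_iff.mpr fun i _ => ?_)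
    rw [hPjj]
    exact hD1 _
  have hPt : IsUnit Pᵀ.det := by rw [Matrix.det_transpose]; exact hPdet
  have hHinv : H⁻¹ = Pᵀ * Matrix.diagonal dinv * P := by
    apply Matrix.inv_eq_left_inv
    have h1 : Matrix.diagonal dvec * Pᵀ⁻¹ = P * H := by
      rw [← hS]
      exact Matrix.mul_nonsing_inv_cancel_right (A := Pᵀ) (P * H) hPt
    have hone : Matrix.diagonal dinv * Matrix.diagonal dvec = 1 := by
      rw [Matrix.diagonal_mul_diagonal]
      have hfun : (fun i => dinv i * dvec i) = fun _ : Fin (n+1) => (1:ℝ) := by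
        funext j
        show dinv j * dvec j = 1
        rw [hdinv, hdvec]
        exact inv_mul_cancel₀ (mul_ne_zero (hD1 _) (hD1 _))
      rw [hfun]
      exact Matrix.diagonal_one
    have key : Pᵀ * (Matrix.diagonal dinv * (P * H)) = 1 := by
      rw [← h1, ← Matrix.mul_assoc (Matrix.diagonal dinv), hone, Matrix.one_mul,
        Matrix.mul_nonsing_inv _ hPt]
    calc Pᵀ * Matrix.diagonal dinv * P * H
        = Pᵀ * (Matrix.diagonal dinv * (P * H)) := by simp only [Matrix.mul_assoc]
      _ = 1 := key
  have hrow : ∀ (j : Fin (n+1)) (x : ℝ),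
      ∑ m : Fin (n+1), P j m * x ^ (m:ℕ) = q (j:ℕ) x := by
    intro j x
    rw [hqalt, ← hsumred j (fun c => x ^ c),
      ← Fin.sum_univ_eq_sum_range
        (fun c => (if c ≤ (j:ℕ) then Stmt11.cofn μ (j:ℕ) c else 0) * x ^ c) (n+1)]
    exact Finset.sum_congr rfl fun i _ => by simp only [hP, Matrix.of_apply]
  set Br : Matrix (Fin 1) (Fin (n+1)) ℝ := Matrix.of fun _ j => v ^ (j:ℕ) with hBr
  set Bc : Matrix (Fin (n+1)) (Fin 1) ℝ := Matrix.of fun i _ => u ^ (i:ℕ) with hBc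
  set K : ℝ := ∑ j : Fin (n+1), dinv j * (q (j:ℕ) u * q (j:ℕ) v) with hK
  have hq_u : ∀ j : Fin (n+1), (P * Bc) j 0 = q (j:ℕ) u := by
    intro j
    rw [Matrix.mul_apply, ← hrow j u]
    exact Finset.sum_congr rfl fun m _ => by simp only [hBc, Matrix.of_apply]
  have hq_v : ∀ j : Fin (n+1), (Br * Pᵀ) 0 j = q (j:ℕ) v := by
    intro j
    rw [Matrix.mul_apply, ← hrow j v]
    refine Finset.sum_congr rfl fun m _ => ?_
    simp only [hBr, Matrix.of_apply, Matrix.transpose_apply]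
    ring
  have hker : (Br * H⁻¹ * Bc) 0 0 = K := by
    rw [hHinv]
    have hassoc : Br * (Pᵀ * Matrix.diagonal dinv * P) * Bc
        = Br * Pᵀ * Matrix.diagonal dinv * (P * Bc) := by
      simp only [Matrix.mul_assoc]
    rw [hassoc, Matrix.mul_apply, hK]
    refine Finset.sum_congr rfl fun j _ => ?_
    rw [Matrix.mul_diagonal, hq_u j, hq_v j]
    ring
  have hB'det : Matrix.det (Matrix.of fun i j : Fin (n + 2) =>
          if (i : ℕ) = 0 then
            (if (j : ℕ) = 0 then 0 else v ^ ((j : ℕ) - 1))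
          else if (j : ℕ) = 0 then u ^ ((i : ℕ) - 1)
          else μ (((i : ℕ) - 1) + ((j : ℕ) - 1))) = D (n+1) * -K := by
    rw [Stmt11.det_bordered μ n u v hHunit]
    have : ((Matrix.of fun (_ : Fin 1) (j : Fin (n+1)) => v ^ (j:ℕ)) *
          (Matrix.of fun i j : Fin (n+1) => μ (i + j))⁻¹ *
          (Matrix.of fun (i : Fin (n+1)) (_ : Fin 1) => u ^ (i:ℕ))) 0 0 = K := hker
    rw [this, hHdet]
  have hLHS : (∑ j ∈ Finset.range (n + 1), (D j / D (j + 1)) * p j u * p j v) = K := by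
    rw [hK, ← Fin.sum_univ_eq_sum_range
      (fun c => (D c / D (c + 1)) * p c u * p c v) (n+1)]
    refine Finset.sum_congr rfl fun j _ => ?_
    rw [hpq, hpq, hdinv]
    have h1 := hD1 (j:ℕ)
    have h2 := hD1 ((j:ℕ)+1)
    field_simp
  constructor
  · have hM : Matrix.det (Matrix.of fun i j : Fin n =>
        u * v * μ (i + j) - (u + v) * μ (i + j + 1) + μ (i + j + 2))
        = D (n+1) * K := by
      have h3 := Stmt11.det_bordered_neg μ n u v
      rw [hB'det] at h3
      have h4 : Matrix.det (Matrix.of fun i j : Fin n =>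
          u * v * μ (i + j) - (u + v) * μ (i + j + 1) + μ (i + j + 2))
          = -(D (n+1) * -K) := by linarith
      rw [h4]; ring
    rw [hLHS, hM]
    field_simp [hD1 (n+1)]
  · rw [hLHS, hB'det]
    field_simp [hD1 (n+1)]
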